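/- The operator T_{α,β} is analytic: the intersection over all n ≥ 1 of the ranges of its powers is trivial, i.e., ⋂_{n≥1} T_{α,β}^n(H) = {0}. -/

import Mathlib

open scoped ComplexConjugate

noncomputable section

/-- The Hilbert space `H = ℓ²(ℕ, ℂ)`. -/
abbrev H : Type := lp (fun _ : ℕ => ℂ) 2

/-- The standard orthonormal basis vectors of `ℓ²(ℕ, ℂ)`. -/
noncomputable def e (n : ℕ) : H := lp.single 2 n (1 : ℂ)

namespace TAnalyticAux

open Filter Topology

lemma e_apply (n k : ℕ) : (e n : ∀ _ : ℕ, ℂ) k = if k = n then 1 else 0 := by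
  by_cases h : k = n
  · subst h; simp [e, lp.single_apply_self]
  · simp [e, lp.single_apply_ne _ _ _ h, h]

/-- The coordinate functional. -/
noncomputable def coord (k : ℕ) : H →L[ℂ] ℂ := innerSL ℂ (e k)

lemma coord_apply (k : ℕ) (x : H) : coord k x = x k := by
  simp [coord, e, lp.inner_single_left]

lemma hasSum_coords (z : H) : HasSum (fun n : ℕ => (z n : ℂ) • e n) z := by
  have h := lp.hasSum_single (E := fun _ : ℕ => ℂ) (p := 2) (by norm_num) z
  have h' : ∀ n : ℕ, lp.single 2 n (z n) = (z n : ℂ) • e n := fun n => by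
    rw [e, ← lp.single_smul, smul_eq_mul, mul_one]
  simpa only [h'] using h

lemma hasSum_apply (φ : H →L[ℂ] ℂ) (z : H) :
    HasSum (fun n : ℕ => z n * φ (e n)) (φ z) := by
  simpa [smul_eq_mul] using (hasSum_coords z).mapL φ

lemma coord_eq (φ : H →L[ℂ] ℂ) (z : H) (m : ℕ)
    (h0 : ∀ n : ℕ, n ≠ m → φ (e n) = 0) : φ z = z m * φ (e m) := by
  have h := (hasSum_apply φ z).tsum_eq
  rw [tsum_eq_single m (fun n hn => by rw [h0 n hn, mul_zero])] at h
  exact h.symm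

end TAnalyticAux

open TAnalyticAux Filter Topology in
/-- `T_{α,β}` is analytic: `⋂_{n ≥ 1} T^n(H) = {0}`. -/
theorem T_analytic (α β : ℂ) (hα : α ≠ 0) (hβ : β ≠ 0)
    (hnorm : ‖α‖ ^ 2 + ‖β‖ ^ 2 = 1)
    (T : H →L[ℂ] H)
    (hT0 : T (e 0) = (α * conj β) • e 0 + β • e 1)
    (hTn : ∀ n : ℕ, 1 ≤ n → T (e n) = e (n + 1)) :
    (⋂ n ∈ Set.Ici 1, Set.range (⇑(T ^ n))) = ({0} : Set H) := by
  set c : ℂ := α * conj β with hc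
  have hc0 : c ≠ 0 := mul_ne_zero hα (by simpa using hβ)
  -- coordinate formulas for T
  have hTz0 : ∀ z : H, (T z : ∀ _ : ℕ, ℂ) 0 = c * z 0 := by
    intro z
    have h := coord_eq ((coord 0).comp T) z 0 (fun n hn => by
      simp [ContinuousLinearMap.comp_apply, hTn n (Nat.one_le_iff_ne_zero.mpr hn),
        coord_apply, e_apply])
    simp only [ContinuousLinearMap.comp_apply, coord_apply, hT0] at h
    have h2 : (((α * conj β) • e 0 + β • e 1 : H) : ∀ _ : ℕ, ℂ) 0 = c := by
      show (α * conj β) * (e 0 : ∀ _ : ℕ, ℂ) 0 + β * (e 1 : ∀ _ : ℕ, ℂ) 0 = c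
      simp [e_apply, hc]
    rw [h, h2]; ring
  have hTz1 : ∀ z : H, (T z : ∀ _ : ℕ, ℂ) 1 = β * z 0 := by
    intro z
    have h := coord_eq ((coord 1).comp T) z 0 (fun n hn => by
      simp [ContinuousLinearMap.comp_apply, hTn n (Nat.one_le_iff_ne_zero.mpr hn),
        coord_apply, e_apply, Nat.succ_ne_zero]
      omega)
    simp only [ContinuousLinearMap.comp_apply, coord_apply, hT0] at h
    have h2 : (((α * conj β) • e 0 + β • e 1 : H) : ∀ _ : ℕ, ℂ) 1 = β := by
      show (α * conj β) * (e 0 : ∀ _ : ℕ, ℂ) 1 + β * (e 1 : ∀ _ : ℕ, ℂ) 1 = β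
      simp [e_apply]
    rw [h, h2]; ring
  have hTzs : ∀ (z : H) (k : ℕ), (T z : ∀ _ : ℕ, ℂ) (k + 2) = z (k + 1) := by
    intro z k
    have h := coord_eq ((coord (k + 2)).comp T) z (k + 1) (fun n hn => by
      rcases Nat.eq_zero_or_pos n with h0 | h1
      · subst h0
        simp [ContinuousLinearMap.comp_apply, hT0, coord_apply, lp.coeFn_add, lp.coeFn_smul,
          e_apply]
        show c * (e 0 : ∀ _ : ℕ, ℂ) (k + 2) + β * (e 1 : ∀ _ : ℕ, ℂ) (k + 2) = 0
        simp [e_apply]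
      · simp [ContinuousLinearMap.comp_apply, hTn n h1, coord_apply, e_apply]
        omega)
    simp only [ContinuousLinearMap.comp_apply, coord_apply,
      hTn (k + 1) (Nat.le_add_left 1 k), e_apply] at h
    simpa using h
  -- coordinate formulas for T^n
  have pow0 : ∀ (n : ℕ) (z : H), ((T ^ n) z : ∀ _ : ℕ, ℂ) 0 = c ^ n * z 0 := by
    intro n
    induction n with
    | zero => intro z; simp
    | succ m ih =>
        intro z
        rw [pow_succ']
        have : ((T * T ^ m) z : H) = T ((T ^ m) z) := rfl
        rw [this, hTz0, ih, pow_succ']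
        ring
  have powk : ∀ n : ℕ, 1 ≤ n → ∀ (z : H) (k : ℕ), 1 ≤ k → k ≤ n →
      ((T ^ n) z : ∀ _ : ℕ, ℂ) k = β * c ^ (n - k) * z 0 := by
    intro n hn
    induction n, hn using Nat.le_induction with
    | base =>
        intro z k hk1 hk2
        interval_cases k
        simp [hTz1 z]
    | succ m hm ih =>
        intro z k hk1 hk2
        have hTTm : ((T ^ (m + 1)) z : H) = T ((T ^ m) z) := by
          rw [pow_succ']; rfl
        obtain _ | _ | j := k
        · omega
        · rw [hTTm, hTz1, pow0, Nat.add_sub_cancel]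
          ring
        · have hexp : m + 1 - (j + 2) = m - (j + 1) := by omega
          rw [hTTm, hTzs, ih z (j + 1) (Nat.le_add_left 1 j) (by omega), hexp]
  -- main argument
  ext y
  simp only [Set.mem_iInter, Set.mem_Ici, Set.mem_singleton_iff, Set.mem_range]
  constructor
  · intro hy
    -- |c| < 1
    have habs : ‖c‖ < 1 := by
      rw [hc, norm_mul, Complex.norm_conj]
      have ha : 0 < ‖α‖ := norm_pos_iff.mpr hα
      have hb : 0 < ‖β‖ := norm_pos_iff.mpr hβ
      nlinarith [sq_nonneg (‖α‖ - ‖β‖)]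
    have habs0 : 0 ≤ ‖c‖ := norm_nonneg c
    -- step 1 : y 1 = 0
    have h1 : ∀ m : ℕ, ‖y 1‖ ≤ ‖c‖ ^ m * ‖y‖ := by
      intro m
      obtain ⟨z, hz⟩ := hy (m + 1) (Nat.le_add_left 1 m)
      have e1 : (y : ∀ _ : ℕ, ℂ) 1 = β * c ^ m * z 0 := by
        rw [← hz, powk (m + 1) (Nat.le_add_left 1 m) z 1 le_rfl (by omega),
          Nat.add_sub_cancel]
      have en : (y : ∀ _ : ℕ, ℂ) (m + 1) = β * z 0 := by
        rw [← hz, powk (m + 1) (Nat.le_add_left 1 m) z (m + 1) (by omega) le_rfl]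
        simp
      have : (y : ∀ _ : ℕ, ℂ) 1 = c ^ m * y (m + 1) := by rw [e1, en]; ring
      rw [this, norm_mul, norm_pow]
      have hle : ‖y (m + 1)‖ ≤ ‖y‖ := by
        simpa using lp.norm_apply_le_norm (by norm_num) y (m + 1)
      exact mul_le_mul_of_nonneg_left hle (pow_nonneg habs0 m)
    have hy1 : (y : ∀ _ : ℕ, ℂ) 1 = 0 := by
      have htend : Tendsto (fun m : ℕ => ‖c‖ ^ m * ‖y‖) atTop (𝓝 0) := by
        simpa using (tendsto_pow_atTop_nhds_zero_of_lt_one habs0 habs).mul_const ‖y‖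
      have : ‖y 1‖ ≤ 0 := ge_of_tendsto' htend h1
      have := le_antisymm this (norm_nonneg _)
      exact norm_eq_zero.mp this
    -- step 2 : all coordinates vanish
    have hcoord : ∀ k : ℕ, (y : ∀ _ : ℕ, ℂ) k = 0 := by
      intro k
      obtain ⟨z, hz⟩ := hy (k + 1) (Nat.le_add_left 1 k)
      have hz0 : z 0 = 0 := by
        have h := powk (k + 1) (Nat.le_add_left 1 k) z 1 le_rfl (by omega)
        rw [hz, hy1] at h
        have := h.symm
        rcases mul_eq_zero.mp this with h' | h'
        · rcases mul_eq_zero.mp h' with h'' | h''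
          · exact absurd h'' hβ
          · exact absurd h'' (pow_ne_zero _ hc0)
        · exact h'
      rcases Nat.eq_zero_or_pos k with hk | hk
      · subst hk
        rw [← hz, pow0, hz0, mul_zero]
      · rw [← hz, powk (k + 1) (Nat.le_add_left 1 k) z k hk (by omega), hz0, mul_zero]
    apply lp.ext
    funext k
    simpa using hcoord k
  · rintro rfl n _
    exact ⟨0, map_zero _⟩

end
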